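/- Let g_1,…,g_T be vectors in ℝ^d and let ρ > 0. Define Ĥ_t := (ρ·I + Σ_{s=1}^{t} g_s g_sᵀ)^{1/2} for t = 1,…,T. Then Σ_{t=1}^{T} (‖g_t‖*_{Ĥ_t})² ≤ 2·tr(Ĥ_T). -/

import Mathlib

open Matrix

lemma psd_trace_nonneg' {d : ℕ} {A : Matrix (Fin d) (Fin d) ℝ} (hA : A.PosSemidef) :
    0 ≤ A.trace := by
  refine Finset.sum_nonneg fun i _ => ?_
  have := hA.dotProduct_mulVec_nonneg (Pi.single i 1)
  simpa [mulVec_single, dotProduct, Pi.single_apply] using this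

lemma psd_vecMulVec' {d : ℕ} (v : Fin d → ℝ) : (vecMulVec v v).PosSemidef := by
  rw [posSemidef_iff_dotProduct_mulVec]; constructor
  · ext i j; simp [vecMulVec, mul_comm, IsHermitian]
  · intro x
    have : (star x) ⬝ᵥ (vecMulVec v v).mulVec x = (v ⬝ᵥ x) * (v ⬝ᵥ x) := by
      simp [vecMulVec, mulVec, dotProduct, Finset.sum_mul, Finset.mul_sum, mul_comm, mul_left_comm]
    rw [this]; exact mul_self_nonneg _

lemma trace_mul_vecMulVec' {d : ℕ} (A : Matrix (Fin d) (Fin d) ℝ) (v : Fin d → ℝ) :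
    (A * vecMulVec v v).trace = v ⬝ᵥ A.mulVec v := by
  simp only [trace, diag, Matrix.mul_apply, vecMulVec_apply, mulVec, dotProduct, Finset.mul_sum]
  exact Finset.sum_congr rfl fun i _ => Finset.sum_congr rfl fun j _ => by ring

lemma trace_mul_psd_nonneg' {d : ℕ} {A B : Matrix (Fin d) (Fin d) ℝ}
    (hA : A.PosSemidef) (hB : B.PosSemidef) : 0 ≤ (A * B).trace := by
  obtain ⟨m, v, hv⟩ := Matrix.posSemidef_iff_eq_sum_vecMulVec.mp hB
  rw [hv, Matrix.mul_sum, trace_sum]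
  refine Finset.sum_nonneg fun i _ => ?_
  rw [star_trivial, trace_mul_vecMulVec']
  simpa using hA.dotProduct_mulVec_nonneg (v i)

lemma step_lemma {d : ℕ} {A B : Matrix (Fin d) (Fin d) ℝ} {v : Fin d → ℝ}
    (hA : A.PosSemidef) (hB : B.PosSemidef) (hdetA : IsUnit A.det)
    (hdiff : A * A = B * B + vecMulVec v v) :
    v ⬝ᵥ A⁻¹.mulVec v ≤ 2 * A.trace - 2 * B.trace := by
  have hiA : A⁻¹ * A = 1 := Matrix.nonsing_inv_mul A hdetA
  have hAi : A * A⁻¹ = 1 := Matrix.mul_nonsing_inv A hdetA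
  have hvv : vecMulVec v v = A * A - B * B := eq_sub_of_add_eq' hdiff.symm
  have e1 : v ⬝ᵥ A⁻¹.mulVec v = A.trace - (A⁻¹ * (B * B)).trace := by
    rw [← trace_mul_vecMulVec', hvv, Matrix.mul_sub, trace_sub, ← Matrix.mul_assoc, hiA,
      Matrix.one_mul]
  have hsq : ((A - B) * (A - B)).PosSemidef := by
    have herm : (A - B).IsHermitian := hA.1.sub hB.1
    have : (A - B) * (A - B) = (A - B)ᴴ * (A - B) := by rw [herm.eq]
    rw [this]
    exact Matrix.posSemidef_conjTranspose_mul_self _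
  have key : 0 ≤ (A⁻¹ * ((A - B) * (A - B))).trace := trace_mul_psd_nonneg' hA.inv hsq
  have e2 : (A⁻¹ * ((A - B) * (A - B))).trace
      = A.trace - 2 * B.trace + (A⁻¹ * (B * B)).trace := by
    have expand : (A - B) * (A - B) = A * A - A * B - B * A + B * B := by noncomm_ring
    rw [expand]
    have h1 : A⁻¹ * (A * A - A * B - B * A + B * B)
        = A - B - A⁻¹ * (B * A) + A⁻¹ * (B * B) := by
      rw [Matrix.mul_add, Matrix.mul_sub, Matrix.mul_sub, ← Matrix.mul_assoc, ← Matrix.mul_assoc,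
        hiA, Matrix.one_mul, Matrix.one_mul]
    have h2 : (A⁻¹ * (B * A)).trace = B.trace := by
      rw [← Matrix.mul_assoc, Matrix.trace_mul_cycle, hAi, Matrix.one_mul]
    rw [h1, trace_add, trace_sub, trace_sub, h2]
    ring
  linarith [key, e1, e2]

/-- AdaGrad-type trace bound. With `Ĥ_t` the positive semidefinite square
root of `ρ·I + Σ_{s=1}^t g_s g_sᵀ` (`ρ > 0`), the sum of squared dual Mahalanobis norms
`Σ_t g_tᵀ Ĥ_t⁻¹ g_t` is at most `2·tr(Ĥ_T)`. -/
theorem dual_norm_sum_le_trace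
    {d : ℕ} (T : ℕ) (g : ℕ → Fin d → ℝ) (ρ : ℝ) (hρ : 0 < ρ)
    (Hhat : ℕ → Matrix (Fin d) (Fin d) ℝ)
    (hHhat : ∀ t, (Hhat t).PosSemidef ∧
      Hhat t * Hhat t =
        ρ • (1 : Matrix (Fin d) (Fin d) ℝ) +
          ∑ s ∈ Finset.Icc 1 t, Matrix.vecMulVec (g s) (g s)) :
    ∑ t ∈ Finset.Icc 1 T, g t ⬝ᵥ (Hhat t)⁻¹.mulVec (g t) ≤ 2 * (Hhat T).trace := by
  -- positive definiteness of ρ•1 + Σ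
  have hsmul : (ρ • (1 : Matrix (Fin d) (Fin d) ℝ)).PosDef := by
    have : ρ • (1 : Matrix (Fin d) (Fin d) ℝ) = diagonal (fun _ => ρ) := by
      rw [smul_one_eq_diagonal]
    rw [this]
    exact Matrix.PosDef.diagonal fun _ => hρ
  have hSpd : ∀ t, (ρ • (1 : Matrix (Fin d) (Fin d) ℝ) +
      ∑ s ∈ Finset.Icc 1 t, Matrix.vecMulVec (g s) (g s)).PosDef := fun t =>
    hsmul.add_posSemidef (by
      classical
      induction (Finset.Icc 1 t) using Finset.induction with
      | empty => simpa using Matrix.PosSemidef.zero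
      | insert _ _ h ih => rw [Finset.sum_insert h]; exact (psd_vecMulVec' _).add ih)
  have hdet : ∀ t, IsUnit (Hhat t).det := by
    intro t
    have h : (Hhat t).det * (Hhat t).det
        = (ρ • (1 : Matrix (Fin d) (Fin d) ℝ) +
            ∑ s ∈ Finset.Icc 1 t, Matrix.vecMulVec (g s) (g s)).det := by
      rw [← det_mul, (hHhat t).2]
    have hpos : 0 < (Hhat t).det * (Hhat t).det := h ▸ (hSpd t).det_pos
    exact isUnit_iff_ne_zero.mpr (by nlinarith)
  have main : ∀ N, ∑ t ∈ Finset.Icc 1 N, g t ⬝ᵥ (Hhat t)⁻¹.mulVec (g t)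
      ≤ 2 * (Hhat N).trace - 2 * (Hhat 0).trace := by
    intro N
    induction N with
    | zero => simp
    | succ N ih =>
      rw [Finset.sum_Icc_succ_top (Nat.succ_le_succ (Nat.zero_le N))]
      have hd : Hhat (N + 1) * Hhat (N + 1)
          = Hhat N * Hhat N + vecMulVec (g (N + 1)) (g (N + 1)) := by
        rw [(hHhat (N + 1)).2, (hHhat N).2,
          Finset.sum_Icc_succ_top (Nat.succ_le_succ (Nat.zero_le N)), add_assoc]
      have := step_lemma (hHhat (N + 1)).1 (hHhat N).1 (hdet (N + 1)) hd
      linarith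
  have h0 : 0 ≤ (Hhat 0).trace := psd_trace_nonneg' (hHhat 0).1
  linarith [main T]
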